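/- Let C be a category with zero morphisms, discarding, split kernels and cokernels (every causal kernel k has a unique co-causal cokernel k♯ with k♯ ∘ k = id, and conversely), satisfying strong pure exclusion and the implications ⊤_A = 0 ⟹ ⊥_A = 0 ⟹ id_A = 0. Then every causal pure state ψ : I → A is a kernel (namely ψ = im(ψ) = ker(coker(ψ)) up to causal isomorphism). -/

import Mathlib

open CategoryTheory MonoidalCategory Limits

variable {C : Type*} [Category C] [MonoidalCategory C] [SymmetricCategory C]

/-- A morphism is causal when discarding after it is discarding. -/
def Causal (top : ∀ A : C, A ⟶ 𝟙_ C) {X Y : C} (f : X ⟶ Y) : Prop :=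
  f ≫ top Y = top X

/-- A morphism is co-causal when it maps the completely mixed state to the
completely mixed state. -/
def CoCausal (bot : ∀ A : C, 𝟙_ C ⟶ A) {X Y : C} (f : X ⟶ Y) : Prop :=
  bot X ≫ f = bot Y

/-- A morphism `f : A ⟶ B` is pure when `f = 0` or every dilation
`g : A ⟶ B ⊗ E` of `f` is of the form `f ⊗ σ` for a causal state `σ`. -/
def IsPure [HasZeroMorphisms C] (top : ∀ A : C, A ⟶ 𝟙_ C) {A B : C}
    (f : A ⟶ B) : Prop :=
  f = 0 ∨ ∀ (E : C) (g : A ⟶ B ⊗ E), g ≫ (𝟙 B ⊗ₘ top E) ≫ (ρ_ B).hom = f →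
    ∃ σ : 𝟙_ C ⟶ E, σ ≫ top E = 𝟙 (𝟙_ C) ∧ g = f ≫ (ρ_ B).inv ≫ (𝟙 B ⊗ₘ σ)

/-- `k : K ⟶ A` is a causal kernel: it is causal and is a kernel of some
morphism out of `A`. -/
def IsCausalKernel [HasZeroMorphisms C] (top : ∀ A : C, A ⟶ 𝟙_ C)
    {K A : C} (k : K ⟶ A) : Prop :=
  Causal top k ∧ ∃ (B : C) (f : A ⟶ B), k ≫ f = 0 ∧
    ∀ (X : C) (g : X ⟶ A), g ≫ f = 0 → ∃! h : X ⟶ K, g = h ≫ k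

/-- `c : A ⟶ Q` is a co-causal cokernel: it is co-causal and is a cokernel of
some morphism into `A`. -/
def IsCoCausalCokernel [HasZeroMorphisms C] (bot : ∀ A : C, 𝟙_ C ⟶ A)
    {A Q : C} (c : A ⟶ Q) : Prop :=
  CoCausal bot c ∧ ∃ (B : C) (f : B ⟶ A), f ≫ c = 0 ∧
    ∀ (X : C) (g : A ⟶ X), f ≫ g = 0 → ∃! h : Q ⟶ X, g = c ≫ h

/-- An object is trivial when its identity factors as `⊥_A ∘ ⊤_A`. -/
def Trivial (top : ∀ A : C, A ⟶ 𝟙_ C) (bot : ∀ A : C, 𝟙_ C ⟶ A) (A : C) : Prop :=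
  𝟙 A = top A ≫ bot A

/-- Let `C` have zero morphisms, discarding `⊤` and completely
mixed states `⊥`, split kernels and cokernels (every morphism has a causal
kernel and a co-causal cokernel; every causal kernel `k` has a unique co-causal
cokernel `k♯` with `k♯ ∘ k = id`, and conversely `k` is the unique causal kernel
with this property), satisfying strong pure exclusion and the implications
`⊤_A = 0 ⟹ ⊥_A = 0 ⟹ id_A = 0`. Then every causal pure state `ψ : I ⟶ A` is a
(causal) kernel. -/
theorem stmt_16 [HasZeroMorphisms C]
    (top : ∀ A : C, A ⟶ 𝟙_ C) (bot : ∀ A : C, 𝟙_ C ⟶ A)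
    (htop_tensor : ∀ A B : C, top (A ⊗ B) = (top A ⊗ₘ top B) ≫ (λ_ (𝟙_ C)).hom)
    (htop_unit : top (𝟙_ C) = 𝟙 (𝟙_ C))
    (hbot_tensor : ∀ A B : C, bot (A ⊗ B) = (λ_ (𝟙_ C)).inv ≫ (bot A ⊗ₘ bot B))
    (hbot_unit : bot (𝟙_ C) = 𝟙 (𝟙_ C))
    -- every morphism has a causal kernel and a co-causal cokernel
    (hker : ∀ {A B : C} (f : A ⟶ B), ∃ (K : C) (k : K ⟶ A),
      Causal top k ∧ k ≫ f = 0 ∧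
        ∀ (X : C) (g : X ⟶ A), g ≫ f = 0 → ∃! h : X ⟶ K, g = h ≫ k)
    (hcoker : ∀ {A B : C} (f : A ⟶ B), ∃ (Q : C) (c : B ⟶ Q),
      CoCausal bot c ∧ f ≫ c = 0 ∧
        ∀ (X : C) (g : B ⟶ X), f ≫ g = 0 → ∃! h : Q ⟶ X, g = c ≫ h)
    -- split kernels and cokernels
    (hsplit : ∀ {K A : C} (k : K ⟶ A), IsCausalKernel top k →
      ∃! c : A ⟶ K, IsCoCausalCokernel bot c ∧ k ≫ c = 𝟙 K)
    (hsplit' : ∀ {K A : C} (k k' : K ⟶ A) (c : A ⟶ K),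
      IsCausalKernel top k → IsCausalKernel top k' →
      IsCoCausalCokernel bot c → k ≫ c = 𝟙 K → k' ≫ c = 𝟙 K → k' = k)
    -- strong pure exclusion
    (hPE : ∀ (A : C), ¬ Trivial top bot A → ∀ ψ : 𝟙_ C ⟶ A, IsPure top ψ →
      ∃ e : A ⟶ 𝟙_ C, e ≠ 0 ∧ ψ ≫ e = 0)
    (hPE' : ∀ (A : C), ¬ Trivial top bot A → ∀ φ : A ⟶ 𝟙_ C, IsPure top φ →
      ∃ ρ : 𝟙_ C ⟶ A, ρ ≠ 0 ∧ ρ ≫ φ = 0)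
    -- ⊤_A = 0 ⟹ ⊥_A = 0 ⟹ id_A = 0
    (h0 : ∀ A : C, top A = 0 → bot A = 0) (h0' : ∀ A : C, bot A = 0 → 𝟙 A = 0)
    -- a causal pure state
    {A : C} (ψ : 𝟙_ C ⟶ A) (hcausal : Causal top ψ) (hpure : IsPure top ψ) :
    IsCausalKernel top ψ := by
  refine ⟨hcausal, ?_⟩
  rcases hpure with hzero | hpureψ
  · -- degenerate case: ψ = 0 forces 𝟙 (𝟙_ C) = 0
    have hI : 𝟙 (𝟙_ C) = 0 := by
      have := hcausal
      simp only [Causal, hzero, zero_comp, htop_unit] at this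
      exact this.symm
    refine ⟨A, 𝟙 A, by simp [hzero], ?_⟩
    intro X g hg
    rw [Category.comp_id] at hg
    refine ⟨0, by simp [hg, hzero], ?_⟩
    intro y _
    calc y = y ≫ 𝟙 (𝟙_ C) := (Category.comp_id y).symm
    _ = 0 := by rw [hI, comp_zero]
  · obtain ⟨Q, c, hc_cocausal, hc0, hc_univ⟩ := hcoker ψ
    obtain ⟨K, k, hk_causal, hkc, hk_univ⟩ := hker c
    have hkkernel : IsCausalKernel top k := ⟨hk_causal, Q, c, hkc, hk_univ⟩
    obtain ⟨r, ⟨_, hkr⟩, -⟩ := hsplit k hkkernel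
    obtain ⟨h, hhk, hhuniq⟩ := hk_univ (𝟙_ C) ψ hc0
    have hhr : ψ ≫ r = h := by rw [hhk, Category.assoc, hkr, Category.comp_id]
    have hhcausal : h ≫ top K = 𝟙 (𝟙_ C) := by
      have h1 : h ≫ top K = ψ ≫ top A := by
        rw [hhk, Category.assoc, hk_causal]
      rw [h1, hcausal, htop_unit]
    have hhpure : IsPure top h := by
      right
      intro E g hg
      have hdil : (g ≫ (k ⊗ₘ 𝟙 E)) ≫ (𝟙 A ⊗ₘ top E) ≫ (ρ_ A).hom = ψ := by
        have e1 : (k ⊗ₘ 𝟙 E) ≫ (𝟙 A ⊗ₘ top E) = (𝟙 K ⊗ₘ top E) ≫ (k ⊗ₘ 𝟙 (𝟙_ C)) := by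
          rw [tensorHom_comp_tensorHom, tensorHom_comp_tensorHom, Category.comp_id, Category.id_comp,
            Category.comp_id, Category.id_comp]
        have e2 : (k ⊗ₘ 𝟙 (𝟙_ C)) ≫ (ρ_ A).hom = (ρ_ K).hom ≫ k := by
          rw [tensorHom_id]; exact rightUnitor_naturality k
        calc (g ≫ (k ⊗ₘ 𝟙 E)) ≫ (𝟙 A ⊗ₘ top E) ≫ (ρ_ A).hom
            = g ≫ ((k ⊗ₘ 𝟙 E) ≫ (𝟙 A ⊗ₘ top E)) ≫ (ρ_ A).hom := by
              simp only [Category.assoc]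
          _ = g ≫ ((𝟙 K ⊗ₘ top E) ≫ (k ⊗ₘ 𝟙 (𝟙_ C))) ≫ (ρ_ A).hom := by rw [e1]
          _ = g ≫ (𝟙 K ⊗ₘ top E) ≫ (ρ_ K).hom ≫ k := by
              simp only [Category.assoc, e2]
          _ = (g ≫ (𝟙 K ⊗ₘ top E) ≫ (ρ_ K).hom) ≫ k := by
              simp only [Category.assoc]
          _ = h ≫ k := by rw [hg]
          _ = ψ := hhk.symm
      obtain ⟨σ, hσc, hσ⟩ := hpureψ E (g ≫ (k ⊗ₘ 𝟙 E)) hdil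
      refine ⟨σ, hσc, ?_⟩
      have e3 : g = (g ≫ (k ⊗ₘ 𝟙 E)) ≫ (r ⊗ₘ 𝟙 E) := by
        rw [Category.assoc, tensorHom_comp_tensorHom, hkr, Category.comp_id, id_tensorHom_id,
          Category.comp_id]
      have e4 : (ρ_ A).inv ≫ (𝟙 A ⊗ₘ σ) ≫ (r ⊗ₘ 𝟙 E) = r ≫ (ρ_ K).inv ≫ (𝟙 K ⊗ₘ σ) := by
        have n1 : r ≫ (ρ_ K).inv = (ρ_ A).inv ≫ (r ⊗ₘ 𝟙 (𝟙_ C)) := by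
          rw [tensorHom_id]; exact rightUnitor_inv_naturality r
        calc (ρ_ A).inv ≫ (𝟙 A ⊗ₘ σ) ≫ (r ⊗ₘ 𝟙 E)
            = (ρ_ A).inv ≫ (r ⊗ₘ σ) := by
              rw [tensorHom_comp_tensorHom, Category.id_comp, Category.comp_id]
          _ = (ρ_ A).inv ≫ (r ⊗ₘ 𝟙 (𝟙_ C)) ≫ (𝟙 K ⊗ₘ σ) := by
              rw [tensorHom_comp_tensorHom, Category.comp_id, Category.id_comp]
          _ = ((ρ_ A).inv ≫ (r ⊗ₘ 𝟙 (𝟙_ C))) ≫ (𝟙 K ⊗ₘ σ) := by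
              rw [Category.assoc]
          _ = (r ≫ (ρ_ K).inv) ≫ (𝟙 K ⊗ₘ σ) := by rw [← n1]
          _ = r ≫ (ρ_ K).inv ≫ (𝟙 K ⊗ₘ σ) := by rw [Category.assoc]
      calc g = (g ≫ (k ⊗ₘ 𝟙 E)) ≫ (r ⊗ₘ 𝟙 E) := e3
        _ = (ψ ≫ (ρ_ A).inv ≫ (𝟙 A ⊗ₘ σ)) ≫ (r ⊗ₘ 𝟙 E) := by rw [hσ]
        _ = ψ ≫ ((ρ_ A).inv ≫ (𝟙 A ⊗ₘ σ) ≫ (r ⊗ₘ 𝟙 E)) := by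
            simp only [Category.assoc]
        _ = ψ ≫ r ≫ (ρ_ K).inv ≫ (𝟙 K ⊗ₘ σ) := by rw [e4]
        _ = h ≫ (ρ_ K).inv ≫ (𝟙 K ⊗ₘ σ) := by rw [← Category.assoc, hhr]
    have htriv : Trivial top bot K := by
      by_contra hnt
      obtain ⟨e, hene, hhe⟩ := hPE K hnt h hhpure
      have hre : ψ ≫ (r ≫ e) = 0 := by rw [← Category.assoc, hhr, hhe]
      obtain ⟨m, hm, -⟩ := hc_univ (𝟙_ C) (r ≫ e) hre
      apply hene
      calc e = (k ≫ r) ≫ e := by rw [hkr, Category.id_comp]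
        _ = k ≫ c ≫ m := by rw [Category.assoc, hm]
        _ = 0 := by rw [← Category.assoc, hkc, zero_comp]
    have hhbot : h = bot K := by
      calc h = h ≫ 𝟙 K := (Category.comp_id h).symm
        _ = h ≫ top K ≫ bot K := by rw [← htriv]
        _ = bot K := by rw [← Category.assoc, hhcausal, Category.id_comp]
    have hth : top K ≫ h = 𝟙 K := by rw [hhbot]; exact htriv.symm
    refine ⟨Q, c, hc0, ?_⟩
    intro X g hg
    obtain ⟨u, hu, huuniq⟩ := hk_univ X g hg
    refine ⟨u ≫ top K, ?_, ?_⟩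
    · calc g = u ≫ k := hu
        _ = u ≫ (top K ≫ h) ≫ k := by rw [hth, Category.id_comp]
        _ = (u ≫ top K) ≫ ψ := by rw [hhk]; simp only [Category.assoc]
    · intro v hv
      have hvh : v ≫ h = u := by
        apply huuniq
        rw [hv, hhk, Category.assoc]
      calc v = v ≫ h ≫ top K := by rw [hhcausal, Category.comp_id]
        _ = (v ≫ h) ≫ top K := by rw [Category.assoc]
        _ = u ≫ top K := by rw [hvh]
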